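/- Let m ∈ ℝ and σ > 0, and let μ be the Gaussian probability measure on ℝ with mean m and variance σ². Then the pushforward of μ ⊗ μ under the map (x, y) ↦ (x, x² + y²) is absolutely continuous with respect to two-dimensional Lebesgue measure, with joint density h(x, r) = (1/(2πσ²))·exp(−(r + 2m²)/(2σ²))·exp(x·m/σ²)·cosh(m·√(r − x²)/σ²)/√(r − x²) on the region {(x, r) : x² < r} and h(x, r) = 0 elsewhere. -/

import Mathlib

open MeasureTheory ProbabilityTheory Real Set
open scoped ENNReal NNReal

lemma lintegral_image_1d {s : Set ℝ} {f : ℝ → ℝ} {f' : ℝ → ℝ}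
    (hs : MeasurableSet s) (hf' : ∀ x ∈ s, HasDerivWithinAt f (f' x) s x)
    (hf : Set.InjOn f s) (g : ℝ → ℝ≥0∞) :
    ∫⁻ x in f '' s, g x = ∫⁻ x in s, ENNReal.ofReal |f' x| * g (f x) := by
  simpa only [ContinuousLinearMap.det_toSpanSingleton] using
    lintegral_image_eq_lintegral_abs_det_fderiv_mul volume hs
      (fun x hx => (hf' x hx).hasFDerivWithinAt) hf g

noncomputable def gr (m : ℝ) (V : ℝ≥0) (a r : ℝ) : ℝ :=
  if a ^ 2 < r then (gaussianPDFReal m V (Real.sqrt (r - a ^ 2)) +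
      gaussianPDFReal m V (-Real.sqrt (r - a ^ 2))) * (2 * Real.sqrt (r - a ^ 2))⁻¹
  else 0

lemma pdf_mul_gr (m σ : ℝ) (hσ : 0 < σ) (x r : ℝ) :
    gaussianPDFReal m ⟨σ ^ 2, sq_nonneg σ⟩ x * gr m ⟨σ ^ 2, sq_nonneg σ⟩ x r =
      if x ^ 2 < r then
        (1 / (2 * π * σ ^ 2)) * Real.exp (-(r + 2 * m ^ 2) / (2 * σ ^ 2)) *
          Real.exp (x * m / σ ^ 2) * Real.cosh (m * Real.sqrt (r - x ^ 2) / σ ^ 2) /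
            Real.sqrt (r - x ^ 2)
      else 0 := by
  unfold gr
  split_ifs with hr
  · set s := Real.sqrt (r - x ^ 2) with hsdef
    have hs : 0 < s := Real.sqrt_pos.mpr (by linarith)
    have hs2 : s ^ 2 = r - x ^ 2 := Real.sq_sqrt (by linarith)
    have hv : (0:ℝ) < σ ^ 2 := by positivity
    have hπ : (0:ℝ) < 2 * π * σ ^ 2 := by positivity
    simp only [gaussianPDFReal, NNReal.coe_mk]
    dsimp only [NNReal.toReal]
    set c := (Real.sqrt (2 * π * σ ^ 2))⁻¹ with hcdef
    have hc2 : c * c = (2 * π * σ ^ 2)⁻¹ := by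
      rw [hcdef, ← mul_inv, Real.mul_self_sqrt hπ.le]
    have e1 : Real.exp (-(x - m) ^ 2 / (2 * σ ^ 2)) * Real.exp (-(s - m) ^ 2 / (2 * σ ^ 2)) =
        Real.exp (-(r + 2 * m ^ 2) / (2 * σ ^ 2)) * Real.exp (x * m / σ ^ 2) *
          Real.exp (m * s / σ ^ 2) := by
      rw [← Real.exp_add, ← Real.exp_add, ← Real.exp_add]
      congr 1
      field_simp
      linear_combination (-1 : ℝ) * hs2
    have e2 : Real.exp (-(x - m) ^ 2 / (2 * σ ^ 2)) * Real.exp (-(-s - m) ^ 2 / (2 * σ ^ 2)) =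
        Real.exp (-(r + 2 * m ^ 2) / (2 * σ ^ 2)) * Real.exp (x * m / σ ^ 2) *
          Real.exp (-(m * s / σ ^ 2)) := by
      rw [← Real.exp_add, ← Real.exp_add, ← Real.exp_add]
      congr 1
      field_simp
      linear_combination (-1 : ℝ) * hs2
    rw [Real.cosh_eq]
    have expand : c * Real.exp (-(x - m) ^ 2 / (2 * σ ^ 2)) *
        ((c * Real.exp (-(s - m) ^ 2 / (2 * σ ^ 2)) +
          c * Real.exp (-(-s - m) ^ 2 / (2 * σ ^ 2))) * (2 * s)⁻¹) =
        (c * c) * ((Real.exp (-(x - m) ^ 2 / (2 * σ ^ 2)) * Real.exp (-(s - m) ^ 2 / (2 * σ ^ 2)))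
          + (Real.exp (-(x - m) ^ 2 / (2 * σ ^ 2)) * Real.exp (-(-s - m) ^ 2 / (2 * σ ^ 2))))
          * (2 * s)⁻¹ := by ring
    rw [expand, e1, e2, hc2]
    field_simp
  · exact mul_zero _

lemma sq_map_measure (m : ℝ) (V : ℝ≥0) (hV : V ≠ 0) (a : ℝ) {t : Set ℝ}
    (ht : MeasurableSet t) :
    gaussianReal m V {y | a ^ 2 + y ^ 2 ∈ t} = ∫⁻ r in t, ENNReal.ofReal (gr m V a r) := by
  set q := a ^ 2 with hq
  set φ : ℝ → ℝ := fun r => Real.sqrt (r - q) with hφdef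
  have hφpos : ∀ r ∈ Ioi q, 0 < φ r := fun r hr => Real.sqrt_pos.mpr (by
    simp only [mem_Ioi] at hr; linarith)
  have hφsq : ∀ r ∈ Ioi q, φ r ^ 2 = r - q := fun r hr => Real.sq_sqrt (by
    simp only [mem_Ioi] at hr; linarith)
  have hφd : ∀ r ∈ Ioi q, HasDerivWithinAt φ ((2 * φ r)⁻¹) (Ioi q) r := by
    intro r hr
    simp only [mem_Ioi] at hr
    have h1 : HasDerivAt (fun r : ℝ => r - q) 1 r := (hasDerivAt_id r).sub_const q
    have h2 := h1.sqrt (sub_ne_zero.mpr hr.ne')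
    simpa [one_div] using h2.hasDerivWithinAt
  have hφinj : Set.InjOn φ (Ioi q) := by
    intro r1 h1 r2 h2 he
    have := congrArg (fun y => y ^ 2) he
    rw [hφsq r1 h1, hφsq r2 h2] at this
    linarith [sub_left_inj.mp this]
  have him1 : φ '' Ioi q = Ioi 0 := by
    ext y
    constructor
    · rintro ⟨r, hr, rfl⟩
      exact hφpos r hr
    · intro hy
      simp only [mem_Ioi] at hy
      refine ⟨q + y ^ 2, by simp [mem_Ioi]; positivity, ?_⟩
      simp only [hφdef, add_sub_cancel_left]
      exact Real.sqrt_sq hy.le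
  have him2 : (fun r => -φ r) '' Ioi q = Iio 0 := by
    ext y
    constructor
    · rintro ⟨r, hr, rfl⟩
      simp only [mem_Iio, neg_lt_zero]
      exact hφpos r hr
    · intro hy
      simp only [mem_Iio] at hy
      refine ⟨q + y ^ 2, by simp only [mem_Ioi]; nlinarith, ?_⟩
      simp only [hφdef, add_sub_cancel_left]
      rw [Real.sqrt_sq_eq_abs, abs_of_neg hy, neg_neg]
  set F : ℝ → ℝ≥0∞ := fun y => t.indicator (fun _ => (1:ℝ≥0∞)) (q + y ^ 2) * gaussianPDF m V y
    with hFdef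
  have hFmeas : Measurable F := by
    apply Measurable.mul
    · exact (measurable_const.indicator ht).comp
        ((measurable_const.add ((measurable_id.pow_const 2))))
    · exact measurable_gaussianPDF m V
  have hset : MeasurableSet {y : ℝ | a ^ 2 + y ^ 2 ∈ t} := by
    exact (measurable_const.add (measurable_id.pow_const 2)) ht
  have step1 : gaussianReal m V {y | a ^ 2 + y ^ 2 ∈ t} = ∫⁻ y, F y := by
    rw [gaussianReal_apply m hV _, ← lintegral_indicator hset]
    congr 1
    ext y
    by_cases hy : a ^ 2 + y ^ 2 ∈ t
    · simp [hFdef, hq, Set.indicator_of_mem, hy, Set.indicator_of_mem (show y ∈ {y : ℝ | a ^ 2 + y ^ 2 ∈ t} from hy)]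
    · simp [hFdef, hq, Set.indicator_of_notMem, hy, Set.indicator_of_notMem (show y ∉ {y : ℝ | a ^ 2 + y ^ 2 ∈ t} from hy)]
  have step2 : ∫⁻ y, F y = (∫⁻ y in Iio (0:ℝ), F y) + ∫⁻ y in Ioi (0:ℝ), F y := by
    rw [← lintegral_union measurableSet_Ioi ((Iio_disjoint_Ici le_rfl).mono_right Ioi_subset_Ici_self),
      Iio_union_Ioi]
    conv_lhs => rw [← MeasureTheory.restrict_compl_singleton (μ := (volume : Measure ℝ)) (0:ℝ)]
  have cov1 : ∫⁻ y in Ioi (0:ℝ), F y =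
      ∫⁻ r in Ioi q, ENNReal.ofReal |(2 * φ r)⁻¹| * F (φ r) := by
    rw [← him1]
    exact lintegral_image_1d measurableSet_Ioi hφd hφinj F
  have hφd2 : ∀ r ∈ Ioi q, HasDerivWithinAt (fun r => -φ r) (-(2 * φ r)⁻¹) (Ioi q) r :=
    fun r hr => (hφd r hr).neg
  have hφinj2 : Set.InjOn (fun r => -φ r) (Ioi q) :=
    fun r1 h1 r2 h2 he => hφinj h1 h2 (neg_injective he)
  have cov2 : ∫⁻ y in Iio (0:ℝ), F y =
      ∫⁻ r in Ioi q, ENNReal.ofReal |-(2 * φ r)⁻¹| * F (-φ r) := by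
    rw [← him2]
    exact lintegral_image_1d measurableSet_Ioi hφd2 hφinj2 F
  have hφm : Measurable φ := Real.continuous_sqrt.measurable.comp (measurable_id.sub_const q)
  have hmeasL : Measurable fun r => ENNReal.ofReal |-(2 * φ r)⁻¹| * F (-φ r) := by
    apply Measurable.mul
    · exact ENNReal.measurable_ofReal.comp ((measurable_const.mul hφm).inv.neg.abs)
    · exact hFmeas.comp hφm.neg
  have hcong : ∀ r ∈ Ioi q,
      ENNReal.ofReal |-(2 * φ r)⁻¹| * F (-φ r) + ENNReal.ofReal |(2 * φ r)⁻¹| * F (φ r) =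
        t.indicator (fun _ => (1:ℝ≥0∞)) r * ENNReal.ofReal (gr m V a r) := by
    intro r hr
    have hpos := hφpos r hr
    have h1 : q + φ r ^ 2 = r := by rw [hφsq r hr]; ring
    have habs : |(2 * φ r)⁻¹| = (2 * φ r)⁻¹ := abs_of_pos (by positivity)
    have hgr : gr m V a r = (gaussianPDFReal m V (φ r) + gaussianPDFReal m V (-φ r)) *
        (2 * φ r)⁻¹ := by
      rw [gr, if_pos (by rw [← hq]; exact hr)]
    have hofr : ENNReal.ofReal (gr m V a r) =
        (ENNReal.ofReal (gaussianPDFReal m V (φ r)) +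
          ENNReal.ofReal (gaussianPDFReal m V (-φ r))) * ENNReal.ofReal ((2 * φ r)⁻¹) := by
      rw [hgr, ENNReal.ofReal_mul (add_nonneg (gaussianPDFReal_nonneg _ _ _) (gaussianPDFReal_nonneg _ _ _))]
      · rw [ENNReal.ofReal_add (gaussianPDFReal_nonneg _ _ _) (gaussianPDFReal_nonneg _ _ _)]
    simp only [hFdef, neg_sq, h1, abs_neg, habs, hofr, gaussianPDF]
    ring
  have key : (∫⁻ y in Iio (0:ℝ), F y) + (∫⁻ y in Ioi (0:ℝ), F y) =
      ∫⁻ r in t, ENNReal.ofReal (gr m V a r) := by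
    rw [cov1, cov2, ← lintegral_add_left hmeasL]
    rw [setLIntegral_congr_fun measurableSet_Ioi hcong]
    rw [← lintegral_indicator measurableSet_Ioi, ← lintegral_indicator ht]
    congr 1
    ext r
    by_cases hr : r ∈ Ioi q
    · rw [Set.indicator_of_mem hr]
      by_cases hrt : r ∈ t
      · simp [Set.indicator_of_mem hrt]
      · simp [Set.indicator_of_notMem hrt]
    · rw [Set.indicator_of_notMem hr]
      have hgr0 : gr m V a r = 0 := by
        rw [gr, if_neg (by rw [← hq]; exact hr)]
      by_cases hrt : r ∈ t
      · simp [Set.indicator_of_mem hrt, hgr0]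
      · simp [Set.indicator_of_notMem hrt]
  rw [step1, step2, key]

theorem joint_density_rice
    (m σ : ℝ) (hσ : 0 < σ)
    (μ : Measure ℝ) (hμ : μ = gaussianReal m ⟨σ ^ 2, sq_nonneg σ⟩)
    (h : ℝ → ℝ → ℝ)
    (hh : ∀ x r : ℝ, h x r =
      if x ^ 2 < r then
        (1 / (2 * π * σ ^ 2)) * Real.exp (-(r + 2 * m ^ 2) / (2 * σ ^ 2)) *
          Real.exp (x * m / σ ^ 2) * Real.cosh (m * Real.sqrt (r - x ^ 2) / σ ^ 2) /
            Real.sqrt (r - x ^ 2)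
      else 0) :
    Measure.map (fun p : ℝ × ℝ => (p.1, p.1 ^ 2 + p.2 ^ 2)) (μ.prod μ) =
      (volume : Measure (ℝ × ℝ)).withDensity (fun q => ENNReal.ofReal (h q.1 q.2)) := by
  subst hμ
  set V : ℝ≥0 := ⟨σ ^ 2, sq_nonneg σ⟩ with hVdef
  have hV : V ≠ 0 := by
    intro hc
    have h2 : (V : ℝ) = 0 := by rw [hc]; rfl
    have h3 : (V : ℝ) = σ ^ 2 := rfl
    nlinarith
  have hT : Measurable (fun p : ℝ × ℝ => (p.1, p.1 ^ 2 + p.2 ^ 2)) :=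
    measurable_fst.prodMk ((measurable_fst.pow_const 2).add (measurable_snd.pow_const 2))
  set GG : ℝ × ℝ → ℝ≥0∞ := fun p => ENNReal.ofReal (gr m V p.1 p.2) with hGGdef
  have hφm : Measurable fun p : ℝ × ℝ => Real.sqrt (p.2 - p.1 ^ 2) :=
    Real.continuous_sqrt.measurable.comp (measurable_snd.sub (measurable_fst.pow_const 2))
  have hGGm : Measurable GG := by
    apply ENNReal.measurable_ofReal.comp
    have : (fun p : ℝ × ℝ => gr m V p.1 p.2) = fun p : ℝ × ℝ =>
        if p.1 ^ 2 < p.2 then (gaussianPDFReal m V (Real.sqrt (p.2 - p.1 ^ 2)) +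
          gaussianPDFReal m V (-Real.sqrt (p.2 - p.1 ^ 2))) * (2 * Real.sqrt (p.2 - p.1 ^ 2))⁻¹
        else 0 := by
      funext p; rw [gr]
    rw [this]
    refine Measurable.ite (measurableSet_lt (measurable_fst.pow_const 2) measurable_snd) ?_
      measurable_const
    exact (((measurable_gaussianPDFReal m V).comp hφm).add
      ((measurable_gaussianPDFReal m V).comp hφm.neg)).mul (measurable_const.mul hφm).inv
  have key : ∀ x r : ℝ, gaussianPDF m V x * GG (x, r) = ENNReal.ofReal (h x r) := by
    intro x r
    rw [hh, ← pdf_mul_gr m σ hσ x r]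
    exact (ENNReal.ofReal_mul (gaussianPDFReal_nonneg m V x)).symm
  set Hfun : ℝ × ℝ → ℝ≥0∞ := fun q => ENNReal.ofReal (h q.1 q.2) with hHdef
  have hHm : Measurable Hfun := by
    have : Hfun = fun q : ℝ × ℝ => gaussianPDF m V q.1 * GG q := by
      funext q
      exact (key q.1 q.2).symm
    rw [this]
    exact ((measurable_gaussianPDF m V).comp measurable_fst).mul hGGm
  ext s hs
  rw [Measure.map_apply hT hs]
  have hpre : MeasurableSet ((fun p : ℝ × ℝ => (p.1, p.1 ^ 2 + p.2 ^ 2)) ⁻¹' s) := hT hs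
  rw [Measure.prod_apply hpre]
  have hinner : ∀ x : ℝ,
      gaussianReal m V (Prod.mk x ⁻¹' ((fun p : ℝ × ℝ => (p.1, p.1 ^ 2 + p.2 ^ 2)) ⁻¹' s)) =
        ∫⁻ r, s.indicator GG (x, r) := by
    intro x
    have htx : MeasurableSet {r : ℝ | (x, r) ∈ s} := measurable_prodMk_left hs
    have hxset : Prod.mk x ⁻¹' ((fun p : ℝ × ℝ => (p.1, p.1 ^ 2 + p.2 ^ 2)) ⁻¹' s) =
        {y : ℝ | x ^ 2 + y ^ 2 ∈ {r | (x, r) ∈ s}} := rfl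
    rw [hxset, sq_map_measure m V hV x htx, ← lintegral_indicator htx]
    refine lintegral_congr fun r => ?_
    by_cases hrt : (x, r) ∈ s
    · simp only [Set.indicator_of_mem (show r ∈ {r | (x, r) ∈ s} from hrt),
        Set.indicator_of_mem hrt]
      rfl
    · simp only [Set.indicator_of_notMem (show r ∉ {r | (x, r) ∈ s} from hrt),
        Set.indicator_of_notMem hrt]
  simp only [hinner]
  have hGm : Measurable fun x : ℝ => ∫⁻ r, s.indicator GG (x, r) :=
    Measurable.lintegral_prod_right (hGGm.indicator hs)
  rw [gaussianReal_of_var_ne_zero m hV,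
    lintegral_withDensity_eq_lintegral_mul _ (measurable_gaussianPDF m V) hGm]
  have hswap : ∀ x : ℝ, (gaussianPDF m V * fun x => ∫⁻ r, s.indicator GG (x, r)) x =
      ∫⁻ r, s.indicator Hfun (x, r) := by
    intro x
    have hmeas : Measurable fun r : ℝ => s.indicator GG (x, r) :=
      (hGGm.indicator hs).comp measurable_prodMk_left
    simp only [Pi.mul_apply]
    rw [← lintegral_const_mul _ hmeas]
    congr 1
    ext r
    by_cases hrt : (x, r) ∈ s
    · rw [Set.indicator_of_mem hrt, Set.indicator_of_mem hrt, key]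
    · rw [Set.indicator_of_notMem hrt, Set.indicator_of_notMem hrt, mul_zero]
  rw [lintegral_congr hswap, withDensity_apply _ hs]
  rw [MeasureTheory.Measure.volume_eq_prod, ← lintegral_indicator hs,
    lintegral_prod _ (hHm.indicator hs).aemeasurable]
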